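/- Let A ∈ ℝ^{n×n}, B ∈ ℝ^{n×m}, K ∈ ℝ^{m×n}, and let l be a {0,1}-valued stochastic process with partial sums L(k) = ∑_{t=0}^{k-1} l(t) satisfying liminf_{k→∞} L(k)/k ≥ σ almost surely, where σ ∈ [0,1]. Consider the closed-loop state process defined sample-path-wise by x(0) = x₀ ∈ ℝⁿ with x₀ ≠ 0 and x(t+1) = (A + (1 − l(t))·B·K)·x(t) for t ∈ ℕ (packet exchanges attempted at every time instant). If there exist a symmetric positive-definite matrix P̂ ∈ ℝ^{n×n} and scalars β̂ ∈ (0,1) and φ̂ ∈ [1,∞) such that (A+BK)ᵀP̂(A+BK) − β̂·P̂ is positive semidefinite, AᵀP̂A − φ̂·P̂ is positive semidefinite, and (1−σ)·ln β̂ + σ·ln φ̂ > 0, then P( lim_{t→∞} ‖x(t)‖ = ∞ ) = 1. -/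

import Mathlib

open MeasureTheory Filter Matrix

lemma quad_step {n : ℕ} {P M : Matrix (Fin n) (Fin n) ℝ} {c : ℝ}
    (h : (Mᵀ * P * M - c • P).PosSemidef) (v : Fin n → ℝ) :
    c * (v ⬝ᵥ P *ᵥ v) ≤ (M *ᵥ v) ⬝ᵥ P *ᵥ (M *ᵥ v) := by
  have h0 := h.dotProduct_mulVec_nonneg v
  simp only [star_trivial, sub_mulVec, dotProduct_sub, smul_mulVec,
    dotProduct_smul, smul_eq_mul] at h0
  have e : v ⬝ᵥ (Mᵀ * P * M) *ᵥ v = (M *ᵥ v) ⬝ᵥ P *ᵥ (M *ᵥ v) := by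
    rw [← mulVec_mulVec, ← mulVec_mulVec, dotProduct_mulVec, vecMul_transpose]
  linarith [h0, e ▸ h0]

lemma quad_norm_bound {n : ℕ} (P : Matrix (Fin n) (Fin n) ℝ) (v : Fin n → ℝ) :
    v ⬝ᵥ P *ᵥ v ≤ (∑ i, ∑ j, |P i j|) * ‖v‖ ^ 2 := by
  have hvi : ∀ i, |v i| ≤ ‖v‖ := fun i => by
    simpa [Real.norm_eq_abs] using norm_le_pi_norm v i
  have hv0 : (0:ℝ) ≤ ‖v‖ := norm_nonneg v
  calc v ⬝ᵥ P *ᵥ v = ∑ i, ∑ j, v i * (P i j * v j) := by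
        simp [dotProduct, mulVec, Finset.mul_sum]
    _ ≤ ∑ i, ∑ j, |P i j| * ‖v‖ ^ 2 := by
        apply Finset.sum_le_sum; intro i _
        apply Finset.sum_le_sum; intro j _
        calc v i * (P i j * v j) ≤ |v i * (P i j * v j)| := le_abs_self _
          _ = |v i| * (|P i j| * |v j|) := by rw [abs_mul, abs_mul]
          _ ≤ ‖v‖ * (|P i j| * ‖v‖) :=
              mul_le_mul (hvi i)
                (mul_le_mul_of_nonneg_left (hvi j) (abs_nonneg _))
                (by positivity) hv0
          _ = |P i j| * ‖v‖ ^ 2 := by ring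
    _ = (∑ i, ∑ j, |P i j|) * ‖v‖ ^ 2 := by
        rw [Finset.sum_mul]; congr 1; ext i; rw [Finset.sum_mul]

theorem closed_loop_almost_sure_instability
    {n m : ℕ} (A : Matrix (Fin n) (Fin n) ℝ) (B : Matrix (Fin n) (Fin m) ℝ)
    (K : Matrix (Fin m) (Fin n) ℝ)
    {Ω : Type*} [MeasurableSpace Ω] (μ : Measure Ω) [IsProbabilityMeasure μ]
    (l : ℕ → Ω → ℝ)
    (h01 : ∀ t ω, l t ω = 0 ∨ l t ω = 1)
    (σ : ℝ) (hσ : σ ∈ Set.Icc (0 : ℝ) 1)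
    (hlim : ∀ᵐ ω ∂μ,
      σ ≤ liminf (fun k : ℕ => (∑ t ∈ Finset.range k, l t ω) / k) atTop)
    (x₀ : Fin n → ℝ) (hx₀ : x₀ ≠ 0)
    (x : Ω → ℕ → Fin n → ℝ)
    (hx0 : ∀ ω, x ω 0 = x₀)
    (hdyn : ∀ ω t, x ω (t + 1) = (A + (1 - l t ω) • (B * K)).mulVec (x ω t))
    (Phat : Matrix (Fin n) (Fin n) ℝ) (hPhat : Phat.PosDef)
    (βhat φhat : ℝ) (hβhat : βhat ∈ Set.Ioo (0 : ℝ) 1) (hφhat : 1 ≤ φhat)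
    (hLMI1 : ((A + B * K)ᵀ * Phat * (A + B * K) - βhat • Phat).PosSemidef)
    (hLMI2 : (Aᵀ * Phat * A - φhat • Phat).PosSemidef)
    (hrate : 0 < (1 - σ) * Real.log βhat + σ * Real.log φhat) :
    ∀ᵐ ω ∂μ, Tendsto (fun t : ℕ => ‖x ω t‖) atTop atTop := by
  rcases Nat.eq_zero_or_pos n with hn | hn
  · subst hn; exact absurd (funext fun i => i.elim0) hx₀
  set a := Real.log βhat with ha
  set b := Real.log φhat with hb
  have ha0 : a < 0 := Real.log_neg hβhat.1 hβhat.2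
  have hb0 : 0 ≤ b := Real.log_nonneg hφhat
  have hd : 0 < b - a := by linarith
  have hrate' : 0 < a + σ * (b - a) := by nlinarith [hrate]
  set δ : ℝ := (a + σ * (b - a)) / 2 with hδdef
  have hδ : 0 < δ := by positivity
  set ε : ℝ := (a + σ * (b - a)) / (2 * (b - a)) with hεdef
  have hε : 0 < ε := by positivity
  have hkey : a + (σ - ε) * (b - a) = δ := by
    rw [hεdef, hδdef]; field_simp; ring
  -- constant for norm comparison
  set C : ℝ := max (∑ i, ∑ j, |Phat i j|) 1 with hCdef
  have hC : 0 < C := lt_of_lt_of_le one_pos (le_max_right _ _)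
  filter_upwards [hlim] with ω hω
  set V : ℕ → ℝ := fun t => x ω t ⬝ᵥ Phat *ᵥ x ω t with hV
  have hV0pos : 0 < V 0 := by
    have := hPhat.dotProduct_mulVec_pos hx₀
    simpa [hV, hx0] using this
  set c : ℕ → ℝ := fun t => if l t ω = 0 then βhat else φhat with hc
  have hcpos : ∀ t, 0 < c t := fun t => by
    rcases h01 t ω with h | h <;> simp only [hc, h] <;> norm_num <;>
      [exact hβhat.1; linarith]
  have hstep : ∀ t, c t * V t ≤ V (t + 1) := by
    intro t
    rcases h01 t ω with h | h
    · have hx' : x ω (t + 1) = (A + B * K) *ᵥ x ω t := by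
        rw [hdyn ω t, h]; norm_num
      have : c t = βhat := by simp [hc, h]
      rw [this, hV]
      simp only [hx']
      exact quad_step hLMI1 (x ω t)
    · have hx' : x ω (t + 1) = A *ᵥ x ω t := by
        rw [hdyn ω t, h]; norm_num
      have : c t = φhat := by simp [hc, h]
      rw [this, hV]
      simp only [hx']
      exact quad_step hLMI2 (x ω t)
  have hprod : ∀ k, (∏ t ∈ Finset.range k, c t) * V 0 ≤ V k := by
    intro k
    induction k with
    | zero => simp
    | succ k ih =>
      rw [Finset.prod_range_succ]
      calc (∏ t ∈ Finset.range k, c t) * c k * V 0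
          = c k * ((∏ t ∈ Finset.range k, c t) * V 0) := by ring
        _ ≤ c k * V k := mul_le_mul_of_nonneg_left ih (hcpos k).le
        _ ≤ V (k + 1) := hstep k
  have hlog : ∀ k, Real.log (∏ t ∈ Finset.range k, c t)
      = k * a + (∑ t ∈ Finset.range k, l t ω) * (b - a) := by
    intro k
    rw [Real.log_prod (fun t _ => (hcpos t).ne')]
    have hlc : ∀ t, Real.log (c t) = a + l t ω * (b - a) := fun t => by
      rcases h01 t ω with h | h <;> simp [hc, h, ha, hb]
    simp_rw [hlc]
    rw [Finset.sum_add_distrib, Finset.sum_const, Finset.card_range,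
      ← Finset.sum_mul, nsmul_eq_mul]
  have hbdd : IsBoundedUnder (· ≥ ·) atTop
      (fun k : ℕ => (∑ t ∈ Finset.range k, l t ω) / k) :=
    ⟨0, eventually_map.2 (Eventually.of_forall fun k =>
      div_nonneg (Finset.sum_nonneg fun t _ => by
        rcases h01 t ω with h | h <;> simp [h]) (Nat.cast_nonneg k))⟩
  have hev : ∀ᶠ k : ℕ in atTop, σ - ε < (∑ t ∈ Finset.range k, l t ω) / k :=
    eventually_lt_of_lt_liminf (lt_of_lt_of_le (by linarith) hω) hbdd
  have hlogev : ∀ᶠ k : ℕ in atTop,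
      (k : ℝ) * δ ≤ Real.log (∏ t ∈ Finset.range k, c t) := by
    filter_upwards [hev, eventually_ge_atTop 1] with k hk hk1
    have hkpos : (0 : ℝ) < k := by exact_mod_cast hk1
    have hL : (σ - ε) * k ≤ ∑ t ∈ Finset.range k, l t ω :=
      ((lt_div_iff₀ hkpos).1 hk).le
    rw [hlog k]
    have h2 : (σ - ε) * k * (b - a) ≤ (∑ t ∈ Finset.range k, l t ω) * (b - a) :=
      mul_le_mul_of_nonneg_right hL hd.le
    calc (k : ℝ) * δ = k * a + (σ - ε) * k * (b - a) := by rw [← hkey]; ring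
      _ ≤ _ := by linarith
  have hlogT : Tendsto (fun k : ℕ => Real.log (∏ t ∈ Finset.range k, c t))
      atTop atTop := by
    apply tendsto_atTop_mono' _ hlogev
    exact (tendsto_natCast_atTop_atTop (R := ℝ)).atTop_mul_const hδ
  have hprodT : Tendsto (fun k : ℕ => ∏ t ∈ Finset.range k, c t) atTop atTop := by
    have := Real.tendsto_exp_atTop.comp hlogT
    refine this.congr fun k => ?_
    exact Real.exp_log (Finset.prod_pos fun t _ => hcpos t)
  have hVT : Tendsto V atTop atTop :=
    tendsto_atTop_mono hprod (hprodT.atTop_mul_const hV0pos)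
  have hnorm2 : ∀ k, V k / C ≤ ‖x ω k‖ ^ 2 := by
    intro k
    rw [div_le_iff₀ hC]
    calc V k ≤ (∑ i, ∑ j, |Phat i j|) * ‖x ω k‖ ^ 2 := quad_norm_bound _ _
      _ ≤ C * ‖x ω k‖ ^ 2 :=
          mul_le_mul_of_nonneg_right (le_max_left _ _) (by positivity)
      _ = ‖x ω k‖ ^ 2 * C := by ring
  have hsqrtT : Tendsto Real.sqrt atTop atTop := by
    refine tendsto_atTop_atTop.2 fun M => ⟨M ^ 2, fun x hx => ?_⟩
    calc M ≤ |M| := le_abs_self M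
      _ = Real.sqrt (M ^ 2) := (Real.sqrt_sq_eq_abs M).symm
      _ ≤ Real.sqrt x := Real.sqrt_le_sqrt hx
  have hsq : Tendsto (fun k => Real.sqrt (V k / C)) atTop atTop :=
    hsqrtT.comp (hVT.atTop_div_const hC)
  apply tendsto_atTop_mono _ hsq
  intro k
  calc Real.sqrt (V k / C) ≤ Real.sqrt (‖x ω k‖ ^ 2) :=
        Real.sqrt_le_sqrt (hnorm2 k)
    _ = ‖x ω k‖ := Real.sqrt_sq (norm_nonneg _)
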